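/- Let N, b, m, τ, k be positive reals with Nbmτ > 1. Then the function g(γ) = 1/(1 + (γτNb + k)/(γNb(γτNb + k) + k²mNb)), defined for γ ≥ 0, attains its unique minimum over [0, ∞) at γ* = (k/(Nbτ))(√(Nbmτ) − 1) > 0. -/
import Mathlib

theorem dapi_optimal_gamma_complete_graph
    (N b m τ k : ℝ) (hN : 0 < N) (hb : 0 < b) (hm : 0 < m) (hτ : 0 < τ) (hk : 0 < k)
    (hcond : 1 < N * b * m * τ) :
    0 < (k / (N * b * τ)) * (Real.sqrt (N * b * m * τ) - 1) ∧
    (∀ γ : ℝ, 0 ≤ γ →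
      1 / (1 + ((k / (N * b * τ)) * (Real.sqrt (N * b * m * τ) - 1) * τ * (N * b) + k) /
          ((k / (N * b * τ)) * (Real.sqrt (N * b * m * τ) - 1) * (N * b) *
            ((k / (N * b * τ)) * (Real.sqrt (N * b * m * τ) - 1) * τ * (N * b) + k) +
            k ^ 2 * m * (N * b)))
        ≤ 1 / (1 + (γ * τ * (N * b) + k) /
          (γ * (N * b) * (γ * τ * (N * b) + k) + k ^ 2 * m * (N * b)))) ∧
    (∀ γ : ℝ, 0 ≤ γ → γ ≠ (k / (N * b * τ)) * (Real.sqrt (N * b * m * τ) - 1) →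
      1 / (1 + ((k / (N * b * τ)) * (Real.sqrt (N * b * m * τ) - 1) * τ * (N * b) + k) /
          ((k / (N * b * τ)) * (Real.sqrt (N * b * m * τ) - 1) * (N * b) *
            ((k / (N * b * τ)) * (Real.sqrt (N * b * m * τ) - 1) * τ * (N * b) + k) +
            k ^ 2 * m * (N * b)))
        < 1 / (1 + (γ * τ * (N * b) + k) /
          (γ * (N * b) * (γ * τ * (N * b) + k) + k ^ 2 * m * (N * b)))) := by
  set A := N * b with hA
  have hA0 : 0 < A := mul_pos hN hb
  set S := Real.sqrt (A * m * τ) with hS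
  have hAmτ0 : (0:ℝ) < A * m * τ := lt_trans one_pos hcond
  have hS2 : S * S = A * m * τ := Real.mul_self_sqrt hAmτ0.le
  have hSnn : 0 ≤ S := Real.sqrt_nonneg _
  have hS1 : 1 < S := by nlinarith
  have hSpos : 0 < S := lt_trans one_pos hS1
  set γ0 := k / (A * τ) * (S - 1) with hγ0
  have hγ0pos : 0 < γ0 := mul_pos (div_pos hk (by positivity)) (by linarith)
  have hu : γ0 * τ * A + k = k * S := by
    rw [hγ0]; field_simp; ring
  have hD0 : 0 < γ0 * A * (γ0 * τ * A + k) + k ^ 2 * m * A := by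
    have h1 : 0 < γ0 * τ * A := by positivity
    have h2 : 0 < γ0 * A * (γ0 * τ * A + k) := by positivity
    positivity
  have hDen : ∀ γ : ℝ, 0 ≤ γ → 0 < γ * A * (γ * τ * A + k) + k ^ 2 * m * A := by
    intro γ hγ
    have h1 : 0 ≤ γ * τ * A := by positivity
    have h2 : 0 ≤ γ * A * (γ * τ * A + k) :=
      mul_nonneg (mul_nonneg hγ hA0.le) (by linarith)
    have h3 : 0 < k ^ 2 * m * A := by positivity
    linarith
  have key : ∀ γ : ℝ,
      (γ0 * τ * A + k) * (γ * A * (γ * τ * A + k) + k ^ 2 * m * A) -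
        (γ * τ * A + k) * (γ0 * A * (γ0 * τ * A + k) + k ^ 2 * m * A) =
      k * S * τ * A ^ 2 * (γ - γ0) ^ 2 := by
    intro γ
    linear_combination (A * (γ - γ0) * k ^ 2) * hS2 +
      (A * (γ - γ0) * (γ * τ * A + k + k * S)) * hu
  refine ⟨hγ0pos, ?_, ?_⟩
  · intro γ hγ
    have hD := hDen γ hγ
    have hnum : 0 < γ * τ * A + k := by
      have : 0 ≤ γ * τ * A := by positivity
      linarith
    apply one_div_le_one_div_of_le
    · have := div_pos hnum hD
      linarith
    · have hle : (γ * τ * A + k) / (γ * A * (γ * τ * A + k) + k ^ 2 * m * A) ≤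
          (γ0 * τ * A + k) / (γ0 * A * (γ0 * τ * A + k) + k ^ 2 * m * A) := by
        rw [div_le_div_iff₀ hD hD0]
        have h := key γ
        have hnn : 0 ≤ k * S * τ * A ^ 2 * (γ - γ0) ^ 2 :=
          mul_nonneg (by positivity) (sq_nonneg _)
        nlinarith
      linarith
  · intro γ hγ hne
    have hD := hDen γ hγ
    have hnum : 0 < γ * τ * A + k := by
      have : 0 ≤ γ * τ * A := by positivity
      linarith
    apply one_div_lt_one_div_of_lt
    · have := div_pos hnum hD
      linarith
    · have hlt : (γ * τ * A + k) / (γ * A * (γ * τ * A + k) + k ^ 2 * m * A) <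
          (γ0 * τ * A + k) / (γ0 * A * (γ0 * τ * A + k) + k ^ 2 * m * A) := by
        rw [div_lt_div_iff₀ hD hD0]
        have h := key γ
        have hsq : 0 < (γ - γ0) ^ 2 := by
          have : γ - γ0 ≠ 0 := sub_ne_zero.mpr hne
          positivity
        have hpos : 0 < k * S * τ * A ^ 2 * (γ - γ0) ^ 2 :=
          mul_pos (by positivity) hsq
        nlinarith
      linarith
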